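/- Let H be a complex inner product space and let v, w, ṽ, w̃ ∈ H be vectors of norm 1. Then √(1 − |⟨w, v⟩|²) ≥ √(1 − |⟨w̃, ṽ⟩|²) − ‖w − w̃‖ − ‖v − ṽ‖. -/

import Mathlib

open Real

-- real "sine triangle inequality" lemma
lemma aux_sin_tri (s t u : ℝ) (hs0 : 0 ≤ s) (hs1 : s ≤ 1)
    (ht0 : 0 ≤ t) (ht1 : t ≤ 1) (hu0 : 0 ≤ u) (hu1 : u ≤ 1)
    (h : t * u - Real.sqrt (1 - t ^ 2) * Real.sqrt (1 - u ^ 2) ≤ s) :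
    Real.sqrt (1 - s ^ 2) ≤ Real.sqrt (1 - t ^ 2) + Real.sqrt (1 - u ^ 2) := by
  set T := Real.sqrt (1 - t ^ 2) with hT
  set U := Real.sqrt (1 - u ^ 2) with hU
  have hT0 : 0 ≤ T := Real.sqrt_nonneg _
  have hU0 : 0 ≤ U := Real.sqrt_nonneg _
  have hT2 : T ^ 2 = 1 - t ^ 2 := Real.sq_sqrt (by nlinarith)
  have hU2 : U ^ 2 = 1 - u ^ 2 := Real.sq_sqrt (by nlinarith)
  by_cases hc : 1 ≤ T + U
  · calc Real.sqrt (1 - s ^ 2) ≤ Real.sqrt 1 := by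
          apply Real.sqrt_le_sqrt; nlinarith
      _ = 1 := Real.sqrt_one
      _ ≤ T + U := hc
  · push_neg at hc
    have htu : T * U ≤ t * u := by nlinarith [sq_nonneg (t*u - T*U), sq_nonneg (t*u + T*U)]
    have htu1 : t * u ≤ 1 := by nlinarith
    have h0 : 0 ≤ t * u - T * U := by linarith
    have hsq : (t * u - T * U) ^ 2 ≤ s ^ 2 := by
      have := pow_le_pow_left₀ h0 h 2
      linarith
    have hkey : 1 - (T + U) ^ 2 ≤ s ^ 2 := by
      nlinarith [mul_nonneg hT0 hU0]
    calc Real.sqrt (1 - s ^ 2) ≤ Real.sqrt ((T + U) ^ 2) := by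
          apply Real.sqrt_le_sqrt; nlinarith
      _ = T + U := by rw [Real.sqrt_sq (by positivity)]

section
variable {H : Type*} [NormedAddCommGroup H] [InnerProductSpace ℂ H]

local notation "⟪" x ", " y "⟫" => @inner ℂ H _ x y

-- trace distance of pure states ≤ norm distance
lemma aux_near (a b : H) (ha : ‖a‖ = 1) (hb : ‖b‖ = 1) :
    Real.sqrt (1 - ‖⟪a, b⟫‖ ^ 2) ≤ ‖a - b‖ := by
  have hcs : ‖⟪a, b⟫‖ ≤ 1 := by
    calc ‖⟪a, b⟫‖ ≤ ‖a‖ * ‖b‖ := norm_inner_le_norm a b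
      _ = 1 := by rw [ha, hb]; ring
  have hre : RCLike.re ⟪a, b⟫ ≤ ‖⟪a, b⟫‖ := RCLike.re_le_norm _
  have hns : ‖a - b‖ ^ 2 = ‖a‖ ^ 2 - 2 * RCLike.re ⟪a, b⟫ + ‖b‖ ^ 2 :=
    @norm_sub_sq ℂ H _ _ _ a b
  calc Real.sqrt (1 - ‖⟪a, b⟫‖ ^ 2) ≤ Real.sqrt (‖a - b‖ ^ 2) := by
        apply Real.sqrt_le_sqrt
        rw [hns, ha, hb]
        nlinarith [norm_nonneg (⟪a, b⟫)]
    _ = ‖a - b‖ := Real.sqrt_sq (norm_nonneg _)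

-- Hermitian angle triangle inequality (inner product form)
lemma aux_herm (a b c : H) (ha : ‖a‖ = 1) (hb : ‖b‖ = 1) (hc : ‖c‖ = 1) :
    ‖⟪a, b⟫‖ * ‖⟪b, c⟫‖ - Real.sqrt (1 - ‖⟪a, b⟫‖ ^ 2) * Real.sqrt (1 - ‖⟪b, c⟫‖ ^ 2)
      ≤ ‖⟪a, c⟫‖ := by
  set p : H := a - ⟪b, a⟫ • b with hp
  set q : H := c - ⟪b, c⟫ • b with hq
  have hbb : ⟪b, b⟫ = (1 : ℂ) := by
    rw [inner_self_eq_norm_sq_to_K, hb]; norm_num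
  have hpb : ⟪b, p⟫ = 0 := by
    simp [hp, inner_sub_right, inner_smul_right, hbb, hb]
  have hqb : ⟪b, q⟫ = 0 := by
    simp [hq, inner_sub_right, inner_smul_right, hbb, hb]
  have hdecomp : ⟪a, c⟫ = ⟪a, b⟫ * ⟪b, c⟫ + ⟪p, q⟫ := by
    have h1 : ⟪p, q⟫ = ⟪a, c⟫ - ⟪a, b⟫ * ⟪b, c⟫ := by
      simp only [hp, hq, inner_sub_left, inner_sub_right, inner_smul_left, inner_smul_right]
      rw [hbb, inner_conj_symm]
      ring
    rw [h1]; ring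
  have hnab : ‖⟪b, a⟫‖ = ‖⟪a, b⟫‖ := by rw [← inner_conj_symm a b, RCLike.norm_conj]
  have hpn : ‖p‖ ^ 2 = 1 - ‖⟪a, b⟫‖ ^ 2 := by
    have h2 : ‖p‖ ^ 2 = ‖a‖ ^ 2 - 2 * RCLike.re ⟪a, ⟪b, a⟫ • b⟫ + ‖⟪b, a⟫ • b‖ ^ 2 :=
      @norm_sub_sq ℂ H _ _ _ a (⟪b, a⟫ • b)
    have h3 : RCLike.re ⟪a, ⟪b, a⟫ • b⟫ = ‖⟪a, b⟫‖ ^ 2 := by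
      rw [inner_smul_right, ← inner_conj_symm b a, RCLike.conj_mul]
      norm_cast
    rw [h2, h3, norm_smul, hnab, ha, hb]
    ring
  have hncb : ‖⟪c, b⟫‖ = ‖⟪b, c⟫‖ := by rw [← inner_conj_symm b c, RCLike.norm_conj]
  have hqn : ‖q‖ ^ 2 = 1 - ‖⟪b, c⟫‖ ^ 2 := by
    have h2 : ‖q‖ ^ 2 = ‖c‖ ^ 2 - 2 * RCLike.re ⟪c, ⟪b, c⟫ • b⟫ + ‖⟪b, c⟫ • b‖ ^ 2 :=
      @norm_sub_sq ℂ H _ _ _ c (⟪b, c⟫ • b)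
    have h3 : RCLike.re ⟪c, ⟪b, c⟫ • b⟫ = ‖⟪b, c⟫‖ ^ 2 := by
      rw [inner_smul_right, ← inner_conj_symm c b, RCLike.mul_conj]
      norm_cast
    rw [h2, h3, norm_smul, hb, hc]
    ring
  have hpq : ‖⟪p, q⟫‖ ≤ Real.sqrt (1 - ‖⟪a, b⟫‖ ^ 2) * Real.sqrt (1 - ‖⟪b, c⟫‖ ^ 2) := by
    calc ‖⟪p, q⟫‖ ≤ ‖p‖ * ‖q‖ := norm_inner_le_norm p q
      _ = Real.sqrt (1 - ‖⟪a, b⟫‖ ^ 2) * Real.sqrt (1 - ‖⟪b, c⟫‖ ^ 2) := by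
          rw [← Real.sqrt_sq (norm_nonneg p), ← Real.sqrt_sq (norm_nonneg q), hpn, hqn]
  calc ‖⟪a, b⟫‖ * ‖⟪b, c⟫‖ - Real.sqrt (1 - ‖⟪a, b⟫‖ ^ 2) * Real.sqrt (1 - ‖⟪b, c⟫‖ ^ 2)
      ≤ ‖⟪a, b⟫ * ⟪b, c⟫‖ - ‖⟪p, q⟫‖ := by
        rw [norm_mul]; linarith
    _ ≤ ‖⟪a, b⟫ * ⟪b, c⟫ + ⟪p, q⟫‖ := by
        have h4 := norm_add_le (⟪a, b⟫ * ⟪b, c⟫ + ⟪p, q⟫) (-⟪p, q⟫)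
        rw [norm_neg] at h4
        have h5 : ⟪a, b⟫ * ⟪b, c⟫ + ⟪p, q⟫ + -⟪p, q⟫ = ⟪a, b⟫ * ⟪b, c⟫ := by ring
        rw [h5] at h4
        linarith
    _ = ‖⟪a, c⟫‖ := by rw [← hdecomp]

-- sine triangle inequality for unit vectors
lemma aux_tri (a b c : H) (ha : ‖a‖ = 1) (hb : ‖b‖ = 1) (hc : ‖c‖ = 1) :
    Real.sqrt (1 - ‖⟪a, c⟫‖ ^ 2) ≤
      Real.sqrt (1 - ‖⟪a, b⟫‖ ^ 2) + Real.sqrt (1 - ‖⟪b, c⟫‖ ^ 2) := by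
  have bd : ∀ x y : H, ‖x‖ = 1 → ‖y‖ = 1 → ‖⟪x, y⟫‖ ≤ 1 := fun x y hx hy => by
    calc ‖⟪x, y⟫‖ ≤ ‖x‖ * ‖y‖ := norm_inner_le_norm x y
      _ = 1 := by rw [hx, hy]; ring
  exact aux_sin_tri _ _ _ (norm_nonneg _) (bd a c ha hc) (norm_nonneg _) (bd a b ha hb)
    (norm_nonneg _) (bd b c hb hc) (aux_herm a b c ha hb hc)

end

theorem sqrt_one_sub_inner_sq_perturbation
    {H : Type*} [NormedAddCommGroup H] [InnerProductSpace ℂ H]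
    (v w v' w' : H) (hv : ‖v‖ = 1) (hw : ‖w‖ = 1) (hv' : ‖v'‖ = 1) (hw' : ‖w'‖ = 1) :
    Real.sqrt (1 - ‖(inner ℂ w' v' : ℂ)‖ ^ 2) - ‖w - w'‖ - ‖v - v'‖ ≤
      Real.sqrt (1 - ‖(inner ℂ w v : ℂ)‖ ^ 2) := by
  have h1 := aux_tri w' w v' hw' hw hv'
  have h2 := aux_tri w v v' hw hv hv'
  have h3 : Real.sqrt (1 - ‖(inner ℂ w' w : ℂ)‖ ^ 2) ≤ ‖w - w'‖ := by
    rw [norm_sub_rev]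
    exact aux_near w' w hw' hw
  have h4 : Real.sqrt (1 - ‖(inner ℂ v v' : ℂ)‖ ^ 2) ≤ ‖v - v'‖ := aux_near v v' hv hv'
  linarith
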